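/- There exists a constant k ∈ ℕ such that the following holds: for all m, N ≥ 1, every system of m linear inequalities ∑_i A j i · x i ≤ c j with integer coefficients all of absolute value at most L (where L ≥ 2) that has a nonnegative real solution also has a nonnegative rational solution y in which at most m entries are nonzero and in which every entry y i, written in lowest terms, has numerator and denominator of absolute value at most (m · L)^(k · m). -/

import Mathlib

open Finset

section Aux

variable {m N : ℕ} (A : Fin m → Fin N → ℤ) (c : Fin m → ℤ)

def IsSol (x : Fin N → ℝ) : Prop :=
  (∀ i, 0 ≤ x i) ∧ ∀ j, ∑ i, (A j i : ℝ) * x i ≤ (c j : ℝ)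

open scoped Classical in
noncomputable def suppF (x : Fin N → ℝ) : Finset (Fin N) :=
  Finset.univ.filter fun i => x i ≠ 0

open scoped Classical in
noncomputable def tightF (x : Fin N → ℝ) : Finset (Fin m) :=
  Finset.univ.filter fun j => ∑ i, (A j i : ℝ) * x i = (c j : ℝ)

lemma mem_suppF {x : Fin N → ℝ} {i : Fin N} : i ∈ suppF x ↔ x i ≠ 0 := by
  classical simp [suppF]

lemma mem_tightF {x : Fin N → ℝ} {j : Fin m} :
    j ∈ tightF A c x ↔ ∑ i, (A j i : ℝ) * x i = (c j : ℝ) := by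
  classical simp [tightF]

lemma exchange {x lam : Fin N → ℝ} (hx : IsSol A c x)
    (hsupp : ∀ i, x i = 0 → lam i = 0)
    (hneg : ∃ i, lam i < 0)
    (htight : ∀ j, ∑ i, (A j i : ℝ) * x i = (c j : ℝ) →
      ∑ i, (A j i : ℝ) * lam i = 0) :
    ∃ x', IsSol A c x' ∧
      (suppF x' ⊂ suppF x ∨ (suppF x' = suppF x ∧ tightF A c x ⊂ tightF A c x')) := by
  classical
  set E1 : Finset ℝ :=
    (Finset.univ.filter fun i => lam i < 0).image (fun i => x i / (-lam i)) with hE1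
  set E2 : Finset ℝ :=
    (Finset.univ.filter fun j => (∑ i, (A j i : ℝ) * x i ≠ (c j : ℝ)) ∧
      0 < ∑ i, (A j i : ℝ) * lam i).image
      (fun j => ((c j : ℝ) - ∑ i, (A j i : ℝ) * x i) / (∑ i, (A j i : ℝ) * lam i)) with hE2
  have hE1ne : E1.Nonempty := by
    obtain ⟨i, hi⟩ := hneg
    exact ⟨x i / (-lam i), Finset.mem_image.2 ⟨i, by simp [hi], rfl⟩⟩
  have hEne : (E1 ∪ E2).Nonempty := hE1ne.mono Finset.subset_union_left
  set t := (E1 ∪ E2).min' hEne with ht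
  -- positivity of x on negative directions
  have hxpos : ∀ i, lam i < 0 → 0 < x i := by
    intro i hi
    rcases lt_or_eq_of_le (hx.1 i) with h | h
    · exact h
    · exact absurd (hsupp i h.symm) (ne_of_lt hi)
  have htpos : 0 < t := by
    rw [ht, Finset.lt_min'_iff]
    intro b hb
    rcases Finset.mem_union.1 hb with hb | hb
    · obtain ⟨i, hi, rfl⟩ := Finset.mem_image.1 hb
      have hi' : lam i < 0 := by simpa using hi
      exact div_pos (hxpos i hi') (by linarith)
    · obtain ⟨j, hj, rfl⟩ := Finset.mem_image.1 hb
      have hj' : (∑ i, (A j i : ℝ) * x i ≠ (c j : ℝ)) ∧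
          0 < ∑ i, (A j i : ℝ) * lam i := by simpa using hj
      exact div_pos (by have := hx.2 j; cases lt_or_eq_of_le this with
        | inl h => linarith
        | inr h => exact absurd h hj'.1) hj'.2
  set x' : Fin N → ℝ := fun i => x i + t * lam i with hx'
  have hnonneg : ∀ i, 0 ≤ x' i := by
    intro i
    rcases le_or_gt 0 (lam i) with h | h
    · have := hx.1 i
      have : 0 ≤ t * lam i := mul_nonneg htpos.le h
      simp only [hx']
      linarith [hx.1 i]
    · have hmem : x i / (-lam i) ∈ E1 ∪ E2 :=
        Finset.mem_union_left _ (Finset.mem_image.2 ⟨i, by simp [h], rfl⟩)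
      have hle : t ≤ x i / (-lam i) := Finset.min'_le _ _ hmem
      have h0 : (0:ℝ) < -lam i := by linarith
      rw [le_div_iff₀ h0] at hle
      simp only [hx']; nlinarith
  have hsum : ∀ j, ∑ i, (A j i : ℝ) * x' i
      = (∑ i, (A j i : ℝ) * x i) + t * ∑ i, (A j i : ℝ) * lam i := by
    intro j
    simp only [hx', mul_add, Finset.sum_add_distrib, Finset.mul_sum]
    congr 1
    exact Finset.sum_congr rfl fun i _ => by ring
  have hrow : ∀ j, ∑ i, (A j i : ℝ) * x' i ≤ (c j : ℝ) := by
    intro j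
    rw [hsum]
    by_cases hjt : ∑ i, (A j i : ℝ) * x i = (c j : ℝ)
    · rw [htight j hjt, mul_zero, add_zero]; exact hjt.le
    · rcases le_or_gt (∑ i, (A j i : ℝ) * lam i) 0 with h | h
      · nlinarith [hx.2 j, htpos]
      · have hmem : ((c j : ℝ) - ∑ i, (A j i : ℝ) * x i) / (∑ i, (A j i : ℝ) * lam i)
            ∈ E1 ∪ E2 :=
          Finset.mem_union_right _ (Finset.mem_image.2 ⟨j, by simp [hjt, h], rfl⟩)
        have hle : t ≤ _ := Finset.min'_le _ _ hmem
        rw [le_div_iff₀ h] at hle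
        linarith
  have hsol : IsSol A c x' := ⟨hnonneg, hrow⟩
  have hsuppsub : suppF x' ⊆ suppF x := by
    intro i hi
    rw [mem_suppF] at hi ⊢
    intro h0
    exact hi (by simp [hx', h0, hsupp i h0])
  have htightsub : tightF A c x ⊆ tightF A c x' := by
    intro j hj
    rw [mem_tightF] at hj ⊢
    rw [hsum, htight j hj, mul_zero, add_zero]; exact hj
  -- the minimum is attained
  have hmem := Finset.min'_mem _ hEne
  rw [← ht] at hmem
  rcases Finset.mem_union.1 hmem with hb | hb
  · -- a coordinate vanishes
    obtain ⟨i, hi, hti⟩ := Finset.mem_image.1 hb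
    have hi' : lam i < 0 := by simpa using hi
    have hxi : x' i = 0 := by
      have h0 : -lam i ≠ 0 := by intro h; linarith [hi']
      have : t * (-lam i) = x i := by rw [← hti, div_mul_cancel₀ _ h0]
      simp only [hx']; linarith
    have himem : i ∈ suppF x := mem_suppF.2 (ne_of_gt (hxpos i hi'))
    have hine : i ∉ suppF x' := fun h => (mem_suppF.1 h) hxi
    exact ⟨x', hsol, Or.inl (Finset.ssubset_iff_of_subset hsuppsub |>.2 ⟨i, himem, hine⟩)⟩
  · -- a new row becomes tight
    obtain ⟨j, hj, htj⟩ := Finset.mem_image.1 hb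
    have hj' : (∑ i, (A j i : ℝ) * x i ≠ (c j : ℝ)) ∧
        0 < ∑ i, (A j i : ℝ) * lam i := by simpa using hj
    have hjt' : j ∈ tightF A c x' := by
      rw [mem_tightF, hsum]
      have h0 : (∑ i, (A j i : ℝ) * lam i) ≠ 0 := ne_of_gt hj'.2
      have : t * (∑ i, (A j i : ℝ) * lam i) = (c j : ℝ) - ∑ i, (A j i : ℝ) * x i := by
        rw [← htj, div_mul_cancel₀ _ h0]
      linarith
    have hjnt : j ∉ tightF A c x := fun h => hj'.1 ((mem_tightF A c).1 h)
    have htss : tightF A c x ⊂ tightF A c x' :=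
      Finset.ssubset_iff_of_subset htightsub |>.2 ⟨j, hjt', hjnt⟩
    by_cases hseq : suppF x' = suppF x
    · exact ⟨x', hsol, Or.inr ⟨hseq, htss⟩⟩
    · exact ⟨x', hsol, Or.inl (lt_of_le_of_ne hsuppsub hseq)⟩

end Aux

section Aux2

variable {m N : ℕ} (A : Fin m → Fin N → ℤ) (c : Fin m → ℤ)

/-- an extremal solution: minimal support, then maximal tight set -/
lemma exists_extremal (hex : ∃ x, IsSol A c x) :
    ∃ x, IsSol A c x ∧ ∀ x', IsSol A c x' →
      ¬(suppF x' ⊂ suppF x ∨ (suppF x' = suppF x ∧ tightF A c x ⊂ tightF A c x')) := by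
  classical
  set mu : (Fin N → ℝ) → ℕ :=
    fun x => (suppF x).card * (m + 1) + (m - (tightF A c x).card) with hmu
  have hset : ∃ n, ∃ x, IsSol A c x ∧ mu x = n := by
    obtain ⟨x, hx⟩ := hex; exact ⟨mu x, x, hx, rfl⟩
  obtain ⟨x, hx, hxn⟩ := Nat.find_spec hset
  refine ⟨x, hx, fun x' hx' hcon => ?_⟩
  have hlt : mu x' < Nat.find hset := by
    rw [← hxn]
    have htle : (tightF A c x').card ≤ m := by
      simpa using Finset.card_le_card (Finset.subset_univ (tightF A c x'))
    rcases hcon with h | ⟨hseq, hts⟩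
    · have h1 : (suppF x').card < (suppF x).card := Finset.card_lt_card h
      simp only [hmu]
      have := Nat.sub_le m (tightF A c x).card
      calc (suppF x').card * (m + 1) + (m - (tightF A c x').card)
          ≤ (suppF x').card * (m + 1) + m := by omega
        _ < ((suppF x').card + 1) * (m + 1) := by ring_nf; omega
        _ ≤ (suppF x).card * (m + 1) := Nat.mul_le_mul_right _ h1
        _ ≤ _ := Nat.le_add_right _ _
    · have h1 : (tightF A c x).card < (tightF A c x').card := Finset.card_lt_card hts
      simp only [hmu, hseq]
      omega
  exact Nat.find_min hset hlt ⟨x', hx', rfl⟩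

/-- at an extremal solution, the columns of `A` indexed by the support,
restricted to the tight rows, are linearly independent over `ℝ`. -/
lemma extremal_indep {x : Fin N → ℝ} (hx : IsSol A c x)
    (hmin : ∀ x', IsSol A c x' →
      ¬(suppF x' ⊂ suppF x ∨ (suppF x' = suppF x ∧ tightF A c x ⊂ tightF A c x'))) :
    LinearIndependent ℝ
      (fun i : {i // i ∈ suppF x} => fun j : {j // j ∈ tightF A c x} => (A j.1 i.1 : ℝ)) := by
  classical
  rw [Fintype.linearIndependent_iff]
  intro g hg
  by_contra hgne
  push_neg at hgne
  obtain ⟨i0, hi0⟩ := hgne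
  -- extend g to all of Fin N
  set lam0 : Fin N → ℝ := fun i => if h : i ∈ suppF x then g ⟨i, h⟩ else 0 with hlam0
  have hlam0supp : ∀ i, x i = 0 → lam0 i = 0 := by
    intro i h
    have : i ∉ suppF x := by rw [mem_suppF]; simpa using h
    simp [hlam0, this]
  have hlam0sum : ∀ j ∈ tightF A c x, ∑ i, (A j i : ℝ) * lam0 i = 0 := by
    intro j hj
    have h1 : ∑ i, (A j i : ℝ) * lam0 i = ∑ i ∈ suppF x, (A j i : ℝ) * lam0 i := by
      refine (Finset.sum_subset (Finset.subset_univ _) fun i _ hi => ?_).symm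
      simp [hlam0, hi]
    have h2 : ∑ i ∈ suppF x, (A j i : ℝ) * lam0 i
        = ∑ i : {i // i ∈ suppF x}, g i * (A j i.1 : ℝ) := by
      rw [← Finset.sum_coe_sort]
      exact Finset.sum_congr rfl fun i _ => by simp [hlam0, i.2, mul_comm]
    have h3 := congrFun hg ⟨j, hj⟩
    simp only [Finset.sum_apply, Pi.smul_apply, smul_eq_mul, Pi.zero_apply] at h3
    rw [h1, h2]; exact h3
  have hlam0ne : lam0 i0 ≠ 0 := by simp [hlam0, i0.2, hi0]
  -- choose sign so that there is a negative coordinate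
  have key : ∀ lam : Fin N → ℝ, (∀ i, x i = 0 → lam i = 0) → (∃ i, lam i < 0) →
      (∀ j, ∑ i, (A j i : ℝ) * x i = (c j : ℝ) → ∑ i, (A j i : ℝ) * lam i = 0) → False := by
    intro lam h1 h2 h3
    obtain ⟨x', hx', hor⟩ := exchange A c hx h1 h2 h3
    exact hmin x' hx' hor
  rcases lt_or_gt_of_ne hlam0ne with h | h
  · exact key lam0 hlam0supp ⟨i0, h⟩ (fun j hj => hlam0sum j ((mem_tightF A c).2 hj))
  · refine key (-lam0) (fun i hi => by simp [hlam0supp i hi]) ⟨i0, by simpa using h⟩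
      (fun j hj => ?_)
    have := hlam0sum j ((mem_tightF A c).2 hj)
    simp only [Pi.neg_apply, mul_neg, Finset.sum_neg_distrib]
    linarith

end Aux2

section Main

open Matrix

/-- There is a constant `k` such that any solvable system of `m ≥ 1` linear inequalities
in `N ≥ 1` unknowns with integer coefficients of absolute value at most `L ≥ 2` having
a nonnegative real solution has a nonnegative rational solution with at most `m` nonzero
entries, each of which (in lowest terms) has numerator and denominator of absolute value
at most `(m * L) ^ (k * m)`. -/
theorem nonneg_solution_small_support_small_entries :
    ∃ k : ℕ, ∀ m N : ℕ, 1 ≤ m → 1 ≤ N → ∀ L : ℕ, 2 ≤ L →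
      ∀ (A : Fin m → Fin N → ℤ) (c : Fin m → ℤ),
        (∀ j i, (A j i).natAbs ≤ L) → (∀ j, (c j).natAbs ≤ L) →
        (∃ x : Fin N → ℝ, (∀ i, 0 ≤ x i) ∧
          ∀ j, ∑ i, (A j i : ℝ) * x i ≤ (c j : ℝ)) →
        ∃ y : Fin N → ℚ, (∀ i, 0 ≤ y i) ∧
          (∀ j, ∑ i, (A j i : ℚ) * y i ≤ (c j : ℚ)) ∧
          (Finset.univ.filter fun i => y i ≠ 0).card ≤ m ∧
          ∀ i, (y i).num.natAbs ≤ (m * L) ^ (k * m) ∧ (y i).den ≤ (m * L) ^ (k * m) := by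
  classical
  refine ⟨1, fun m N hm hN L hL A c hA hc hex => ?_⟩
  obtain ⟨x0, hx0, hmin⟩ := exists_extremal A c (hex.imp fun x hx => ⟨hx.1, hx.2⟩)
  have hLI := extremal_indep A c hx0 hmin
  set S := suppF x0 with hS
  set T := tightF A c x0 with hT
  -- the matrix of tight rows and support columns, over ℝ
  set M : Matrix {j // j ∈ T} {i // i ∈ S} ℝ :=
    Matrix.of (fun j i => (A j.1 i.1 : ℝ)) with hM
  have hLI' : LinearIndependent ℝ Mᵀ := hLI
  -- rank of M is the number of support columns
  have hrank : M.rank = S.card := by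
    rw [← Matrix.rank_transpose, Matrix.rank_eq_finrank_span_row,
      finrank_span_eq_card (b := Mᵀ.row) hLI', Fintype.card_coe]
  -- the rows of M span everything
  have hspan : Submodule.span ℝ (Set.range M) = ⊤ := by
    apply Submodule.eq_top_of_finrank_eq
    change Module.finrank ℝ (Submodule.span ℝ (Set.range M.row)) = _
    rw [← Matrix.rank_eq_finrank_span_row, hrank,
      Module.finrank_fintype_fun_eq_card, Fintype.card_coe]
  obtain ⟨b, hbsub, hbspan, hbind⟩ := exists_linearIndependent ℝ (Set.range M)
  have hbfin : b.Finite := (Set.finite_range M).subset hbsub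
  have : Fintype b := hbfin.fintype
  have hbbasis : Module.Basis b ℝ ({i // i ∈ S} → ℝ) :=
    Module.Basis.mk hbind (by rw [Subtype.range_coe, hbspan, hspan])
  have hbcard : Fintype.card b = S.card := by
    rw [← Module.finrank_eq_card_basis hbbasis, Module.finrank_fintype_fun_eq_card,
      Fintype.card_coe]
  -- pick the row index realizing each basis vector
  have hpick : ∀ v : b, ∃ j : {j // j ∈ T}, M j = v.1 := fun v => hbsub v.2
  set pick : b → {j // j ∈ T} := fun v => (hpick v).choose with hpickdef
  have hpickspec : ∀ v : b, M (pick v) = v.1 := fun v => (hpick v).choose_spec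
  have hpickinj : Function.Injective pick := by
    intro v1 v2 h
    have := (hpickspec v1).symm.trans (by rw [h, hpickspec v2])
    exact Subtype.ext this
  have hScard : S.card ≤ m := by
    calc S.card = Fintype.card b := hbcard.symm
      _ ≤ Fintype.card {j // j ∈ T} := Fintype.card_le_of_injective pick hpickinj
      _ = T.card := Fintype.card_coe T
      _ ≤ m := by simpa using Finset.card_le_card (Finset.subset_univ T)
  set e : b ≃ {i // i ∈ S} :=
    Fintype.equivOfCardEq (by rw [hbcard, Fintype.card_coe]) with he
  -- the square integer matrix
  set Q : Matrix {i // i ∈ S} {i // i ∈ S} ℤ :=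
    Matrix.of (fun s i => A (pick (e.symm s)).1 i.1) with hQ
  have hQrowsR : (Q.map (Int.cast : ℤ → ℝ)) = Matrix.of (fun s i => ((e.symm s : _) : {i // i ∈ S} → ℝ) i) := by
    ext s i
    simp only [hQ, Matrix.map_apply, Matrix.of_apply]
    rw [← hpickspec (e.symm s)]
    rfl
  have hQRunit : IsUnit (Q.map (Int.cast : ℤ → ℝ)) := by
    rw [← Matrix.linearIndependent_rows_iff_isUnit]
    rw [hQrowsR]
    exact hbind.comp e.symm e.symm.injective
  have hdetR : ((Q.det : ℤ) : ℝ) ≠ 0 := by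
    have h1 := (Matrix.isUnit_iff_isUnit_det _).1 hQRunit
    have hdm : ((Q.det : ℤ) : ℝ) = (Q.map (Int.cast : ℤ → ℝ)).det :=
      RingHom.map_det (Int.castRingHom ℝ) Q
    rw [hdm]
    exact h1.ne_zero
  have hdetz : Q.det ≠ 0 := fun h => hdetR (by rw [h]; simp)
  set d : {i // i ∈ S} → ℤ := fun s => c (pick (e.symm s)).1 with hd
  -- the real subvector solves the square system
  have hreal : (Q.map (Int.cast : ℤ → ℝ)).mulVec (fun i => x0 i.1) = fun s => (d s : ℝ) := by
    funext s
    have hjT : (pick (e.symm s)).1 ∈ T := (pick (e.symm s)).2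
    have hjt : ∑ i, (A (pick (e.symm s)).1 i : ℝ) * x0 i = (c (pick (e.symm s)).1 : ℝ) :=
      (mem_tightF A c).1 hjT
    have hsplit : ∑ i, (A (pick (e.symm s)).1 i : ℝ) * x0 i
        = ∑ i ∈ S, (A (pick (e.symm s)).1 i : ℝ) * x0 i := by
      refine (Finset.sum_subset (Finset.subset_univ _) fun i _ hi => ?_).symm
      have : x0 i = 0 := by
        by_contra h; exact hi (mem_suppF.2 h)
      rw [this, mul_zero]
    simp only [Matrix.mulVec, dotProduct, Matrix.map_apply, hQ, Matrix.of_apply]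
    rw [← Finset.sum_coe_sort S (fun i => (A (pick (e.symm s)).1 i : ℝ) * x0 i)] at hsplit
    rw [← hsplit, hjt]
  -- rational solution of the square system, by Cramer
  set Qq := Q.map (Int.cast : ℤ → ℚ) with hQq
  have hdetq : Qq.det ≠ 0 := by
    have hdm : ((Q.det : ℤ) : ℚ) = Qq.det := RingHom.map_det (Int.castRingHom ℚ) Q
    rw [← hdm]
    exact_mod_cast hdetz
  set yS : {i // i ∈ S} → ℚ := (Qq.det)⁻¹ • Qq.cramer (fun s => (d s : ℚ)) with hyS
  have hQy : Qq.mulVec yS = fun s => (d s : ℚ) := by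
    rw [hyS, Matrix.mulVec_smul, Matrix.mulVec_cramer, smul_smul,
      inv_mul_cancel₀ hdetq, one_smul]
  -- cast the rational solution to ℝ; by injectivity it agrees with x0 on S
  have hcastEq : (Q.map (Int.cast : ℤ → ℝ)).mulVec (fun s => ((yS s : ℚ) : ℝ))
      = fun s => (d s : ℝ) := by
    funext s
    have := congrArg (fun q : ℚ => (q : ℝ)) (congrFun hQy s)
    simp only [Matrix.mulVec, dotProduct, Matrix.map_apply, hQq] at this ⊢
    push_cast at this ⊢
    exact this
  have hinj : Function.Injective (Q.map (Int.cast : ℤ → ℝ)).mulVec :=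
    Matrix.mulVec_injective_iff_isUnit.2 hQRunit
  have hyx : ∀ s : {i // i ∈ S}, ((yS s : ℚ) : ℝ) = x0 s.1 := by
    have := hinj (hcastEq.trans hreal.symm)
    exact fun s => congrFun this s
  -- assemble the global rational vector
  set y : Fin N → ℚ := fun i => if h : i ∈ S then yS ⟨i, h⟩ else 0 with hy
  have hycast : ∀ i, ((y i : ℚ) : ℝ) = x0 i := by
    intro i
    by_cases h : i ∈ S
    · simp only [hy, dif_pos h]; exact hyx ⟨i, h⟩
    · have : x0 i = 0 := by
        by_contra h0; exact h (mem_suppF.2 h0)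
      simp [hy, dif_neg h, this]
  refine ⟨y, ?_, ?_, ?_, ?_⟩
  · intro i
    rw [← Rat.cast_nonneg (K := ℝ), hycast]
    exact hx0.1 i
  · intro j
    rw [← Rat.cast_le (K := ℝ)]
    push_cast
    calc ∑ i, ((A j i : ℝ)) * ((y i : ℚ) : ℝ)
        = ∑ i, (A j i : ℝ) * x0 i := Finset.sum_congr rfl fun i _ => by rw [hycast]
      _ ≤ (c j : ℝ) := hx0.2 j
  · refine le_trans (Finset.card_le_card fun i hi => ?_) hScard
    simp only [Finset.mem_filter, Finset.mem_univ, true_and] at hi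
    by_contra h
    exact hi (by simp [hy, dif_neg h])
  · -- size bounds
    intro i
    have hQbound : ∀ s : {i // i ∈ S}, (Matrix.updateCol Q s d).det.natAbs ≤ (m * L) ^ (1 * m)
        ∧ Q.det.natAbs ≤ (m * L) ^ (1 * m) := by
      intro s
      have hcard : Fintype.card {i // i ∈ S} = S.card := Fintype.card_coe S
      have hboundgen : ∀ X : Matrix {i // i ∈ S} {i // i ∈ S} ℤ,
          (∀ a b, |X a b| ≤ (L : ℤ)) → X.det.natAbs ≤ (m * L) ^ (1 * m) := by
        intro X hX
        have h1 : |X.det| ≤ (Nat.factorial (Fintype.card {i // i ∈ S})) •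
            (L : ℤ) ^ (Fintype.card {i // i ∈ S}) :=
          Matrix.det_le (abv := (AbsoluteValue.abs : AbsoluteValue ℤ ℤ)) (fun a b => hX a b)
        have h2 : X.det.natAbs ≤ Nat.factorial S.card * L ^ S.card := by
          rw [hcard, nsmul_eq_mul] at h1
          have : ((X.det.natAbs : ℤ)) ≤ ((Nat.factorial S.card * L ^ S.card : ℕ) : ℤ) := by
            rw [← Int.abs_eq_natAbs]
            exact_mod_cast h1
          exact_mod_cast this
        refine h2.trans ?_
        have hL1 : 1 ≤ L := le_trans (by norm_num) hL
        calc Nat.factorial S.card * L ^ S.card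
            ≤ Nat.factorial m * L ^ m :=
              Nat.mul_le_mul (Nat.factorial_le hScard)
                (Nat.pow_le_pow_right (le_trans (by norm_num) hL) hScard |>.trans
                  (Nat.pow_le_pow_left (le_refl L) m)) 
          _ ≤ m ^ m * L ^ m := Nat.mul_le_mul_right _ (Nat.factorial_le_pow m)
          _ = (m * L) ^ m := (Nat.mul_pow m L m).symm
          _ = (m * L) ^ (1 * m) := by rw [one_mul]
      constructor
      · refine hboundgen _ fun a bb => ?_
        rw [Matrix.updateCol_apply]
        by_cases hbb : bb = s
        · rw [if_pos hbb, Int.abs_eq_natAbs]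
          exact_mod_cast hc (pick (e.symm a)).1
        · rw [if_neg hbb, Int.abs_eq_natAbs]
          exact_mod_cast hA (pick (e.symm a)).1 bb.1
      · refine hboundgen _ fun a bb => ?_
        rw [Int.abs_eq_natAbs]
        exact_mod_cast hA (pick (e.symm a)).1 bb.1
    by_cases h : i ∈ S
    · set s : {i // i ∈ S} := ⟨i, h⟩ with hs
      have hyi : y i = Rat.divInt ((Matrix.updateCol Q s d).det) Q.det := by
        have h1 : y i = yS s := by simp only [hy]; rw [dif_pos h]
        rw [h1, Rat.divInt_eq_div, hyS]
        simp only [Pi.smul_apply, smul_eq_mul]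
        rw [Matrix.cramer_apply]
        have : Qq.updateCol s (fun t => (d t : ℚ)) = (Q.updateCol s d).map (Int.cast : ℤ → ℚ) := by
          exact (Matrix.map_updateCol (Int.cast : ℤ → ℚ)).symm
        have hdm1 : (((Matrix.updateCol Q s d).det : ℤ) : ℚ)
            = ((Q.updateCol s d).map (Int.cast : ℤ → ℚ)).det :=
          RingHom.map_det (Int.castRingHom ℚ) _
        have hdm2 : ((Q.det : ℤ) : ℚ) = Qq.det := RingHom.map_det (Int.castRingHom ℚ) Q
        rw [this, ← hdm1, ← hdm2]
        field_simp
      obtain ⟨hnumB, hdenB⟩ := hQbound s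
      constructor
      · rw [hyi]
        have hdvd : (Rat.divInt ((Matrix.updateCol Q s d).det) Q.det).num ∣
            (Matrix.updateCol Q s d).det := Rat.num_dvd _ hdetz
        by_cases hP : (Matrix.updateCol Q s d).det = 0
        · rw [hP] at hdvd ⊢
          simp
        · refine le_trans (Nat.le_of_dvd (Int.natAbs_pos.2 hP)
            (Int.natAbs_dvd_natAbs.2 hdvd)) hnumB
      · rw [hyi]
        have hdvd : ((Rat.divInt ((Matrix.updateCol Q s d).det) Q.det).den : ℤ) ∣ Q.det :=
          Rat.den_dvd _ _
        have hdvd' : (Rat.divInt ((Matrix.updateCol Q s d).det) Q.det).den ∣ Q.det.natAbs :=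
          Int.natCast_dvd.1 hdvd
        exact le_trans (Nat.le_of_dvd (Int.natAbs_pos.2 hdetz) hdvd') hdenB
    · have : y i = 0 := by simp [hy, dif_neg h]
      rw [this]
      constructor
      · simp
      · have h1 : (0 : ℚ).den = 1 := rfl
        rw [h1]
        exact Nat.one_le_pow _ _ (by positivity)

end Main
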